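/- Let α, ω : ℝ → ℝ, f > 0, Ω ∈ ℝ, and let ρ₀ > 0. There exists ψ₀ ∈ ℝ such that (ρ₀, ψ₀) is an equilibrium of the co-rotating forced normal form if and only if f² ≥ α(ρ₀)²·ρ₀² and either Ω = ω(ρ₀) + √(f²/ρ₀² − α(ρ₀)²) or Ω = ω(ρ₀) − √(f²/ρ₀² − α(ρ₀)²). Moreover, every such ψ₀ satisfies sin ψ₀ = α(ρ₀)·ρ₀ / f. (These relations are the closed-form frequency response curve parametrized by the amplitude ρ₀.) -/

import Mathlib

lemma exists_sin_cos (x y : ℝ) (h : x ^ 2 + y ^ 2 = 1) :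
    ∃ ψ : ℝ, Real.sin ψ = x ∧ Real.cos ψ = y := by
  have hy1 : -1 ≤ y := by nlinarith [sq_nonneg x]
  have hy2 : y ≤ 1 := by nlinarith [sq_nonneg x]
  have hs : Real.sin (Real.arccos y) = |x| := by
    rw [Real.sin_arccos]
    have : 1 - y ^ 2 = x ^ 2 := by linarith
    rw [this, Real.sqrt_sq_eq_abs]
  rcases le_or_gt 0 x with hx | hx
  · exact ⟨Real.arccos y, by rw [hs, abs_of_nonneg hx], Real.cos_arccos hy1 hy2⟩
  · refine ⟨-Real.arccos y, ?_, by rw [Real.cos_neg, Real.cos_arccos hy1 hy2]⟩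
    rw [Real.sin_neg, hs, abs_of_neg hx, neg_neg]

/-- For `ρ₀ > 0` there exists a phase `ψ₀` making `(ρ₀, ψ₀)` an
equilibrium of the co-rotating forced normal form iff `f² ≥ α(ρ₀)² ρ₀²` and
`Ω = ω(ρ₀) ± √(f²/ρ₀² − α(ρ₀)²)`; moreover any such `ψ₀` satisfies
`sin ψ₀ = α(ρ₀) ρ₀ / f` (the closed-form frequency response curve). -/
theorem corotating_equilibrium_frequency_response
    (α ω : ℝ → ℝ) (f : ℝ) (hf : f > 0) (Ω : ℝ)
    (ρ₀ : ℝ) (hρ₀ : ρ₀ > 0) :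
    ((∃ ψ₀ : ℝ, -α ρ₀ * ρ₀ + f * Real.sin ψ₀ = 0 ∧
        ω ρ₀ - Ω + (f / ρ₀) * Real.cos ψ₀ = 0) ↔
      (f ^ 2 ≥ (α ρ₀) ^ 2 * ρ₀ ^ 2 ∧
        (Ω = ω ρ₀ + Real.sqrt (f ^ 2 / ρ₀ ^ 2 - (α ρ₀) ^ 2) ∨
         Ω = ω ρ₀ - Real.sqrt (f ^ 2 / ρ₀ ^ 2 - (α ρ₀) ^ 2)))) ∧
    (∀ ψ₀ : ℝ, -α ρ₀ * ρ₀ + f * Real.sin ψ₀ = 0 ∧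
        ω ρ₀ - Ω + (f / ρ₀) * Real.cos ψ₀ = 0 →
      Real.sin ψ₀ = α ρ₀ * ρ₀ / f) := by
  have hfne : f ≠ 0 := ne_of_gt hf
  have hρne : ρ₀ ≠ 0 := ne_of_gt hρ₀
  set a := α ρ₀
  set w := ω ρ₀
  constructor
  · constructor
    · rintro ⟨ψ, h1, h2⟩
      have hs : Real.sin ψ = a * ρ₀ / f := by field_simp; linarith
      have hc : Real.cos ψ = (Ω - w) * ρ₀ / f := by
        field_simp
        have := h2
        field_simp at this
        nlinarith [this]
      have hpy : Real.sin ψ ^ 2 + Real.cos ψ ^ 2 = 1 := Real.sin_sq_add_cos_sq ψ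
      rw [hs, hc] at hpy
      have key : a ^ 2 * ρ₀ ^ 2 + (Ω - w) ^ 2 * ρ₀ ^ 2 = f ^ 2 := by
        field_simp at hpy; nlinarith [hpy]
      have hge : f ^ 2 ≥ a ^ 2 * ρ₀ ^ 2 := by nlinarith [sq_nonneg ((Ω - w) * ρ₀)]
      refine ⟨hge, ?_⟩
      have hsq : (Ω - w) ^ 2 = f ^ 2 / ρ₀ ^ 2 - a ^ 2 := by
        field_simp; nlinarith [key]
      have habs : |Ω - w| = Real.sqrt (f ^ 2 / ρ₀ ^ 2 - a ^ 2) := by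
        rw [← hsq, Real.sqrt_sq_eq_abs]
      rcases abs_cases (Ω - w) with ⟨he, _⟩ | ⟨he, _⟩
      · left; linarith [habs ▸ he]
      · right; linarith [habs ▸ he]
    · rintro ⟨hge, hΩ⟩
      have hnn : 0 ≤ f ^ 2 / ρ₀ ^ 2 - a ^ 2 := by
        rw [sub_nonneg, le_div_iff₀ (by positivity)]
        nlinarith
      have hsq : Real.sqrt (f ^ 2 / ρ₀ ^ 2 - a ^ 2) ^ 2 = f ^ 2 / ρ₀ ^ 2 - a ^ 2 :=
        Real.sq_sqrt hnn
      set r := Real.sqrt (f ^ 2 / ρ₀ ^ 2 - a ^ 2)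
      have hΩ2 : (Ω - w) ^ 2 = f ^ 2 / ρ₀ ^ 2 - a ^ 2 := by
        have hd : Ω - w = r ∨ Ω - w = -r := by
          rcases hΩ with h | h
          · left; rw [h]; ring
          · right; rw [h]; ring
        rcases hd with h | h <;> rw [h]
        · exact hsq
        · rw [neg_pow]; simpa using hsq
      have hdiv : f ^ 2 / ρ₀ ^ 2 * ρ₀ ^ 2 = f ^ 2 := by field_simp
      have hunits : (a * ρ₀ / f) ^ 2 + ((Ω - w) * ρ₀ / f) ^ 2 = 1 := by
        field_simp
        nlinarith [hΩ2, hdiv]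
      obtain ⟨ψ, hsψ, hcψ⟩ := exists_sin_cos _ _ hunits
      refine ⟨ψ, ?_, ?_⟩
      · rw [hsψ]; field_simp; ring
      · rw [hcψ]; field_simp; ring
  · rintro ψ ⟨h1, _⟩
    field_simp; linarith
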